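/- Let 𝕊 be an algebraic theory in which every operation of positive arity has a unit constant, and which has a term with at least two free variables. Let 𝕋 be an algebraic theory in which any term equal to a variable-free term is itself variable-free. If 𝕋 has two distinct constants (i.e., two constants not provably equal), then there exists no composite theory of 𝕊 and 𝕋. -/

import Mathlib

/-! ### Algebraic theories, equational logic, and composite theories -/

structure Signature where
  Op : Type
  ar : Op → Nat

inductive Term (Sg : Signature) (V : Type) : Type
  | var : V → Term Sg V
  | op : (o : Sg.Op) → (Fin (Sg.ar o) → Term Sg V) → Term Sg V

def Term.subst {Sg : Signature} {V W : Type} : Term Sg V → (V → Term Sg W) → Term Sg W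
  | .var v, f => f v
  | .op o ts, f => .op o (fun i => (ts i).subst f)

/-- Renaming of variables. -/
def Term.rename {Sg : Signature} {V W : Type} (f : V → W) (t : Term Sg V) : Term Sg W :=
  t.subst (fun v => .var (f v))

/-- The set of free variables of a term. -/
def Term.fv {Sg : Signature} {V : Type} : Term Sg V → Set V
  | .var v => {v}
  | .op _ ts => ⋃ i, (ts i).fv

/-- An algebraic theory: a signature together with a set of equations (axioms),
given as pairs of terms over the variables ℕ. -/
structure Theory where
  sig : Signature
  Ax : Term sig Nat → Term sig Nat → Prop

/-- Provable equality in equational logic over a theory. -/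
inductive Theory.Eq (T : Theory) : {V : Type} → Term T.sig V → Term T.sig V → Prop
  | ax {V : Type} {s t : Term T.sig Nat} (h : T.Ax s t) (f : Nat → Term T.sig V) :
      Theory.Eq T (s.subst f) (t.subst f)
  | refl {V : Type} (t : Term T.sig V) : Theory.Eq T t t
  | symm {V : Type} {s t : Term T.sig V} : Theory.Eq T s t → Theory.Eq T t s
  | trans {V : Type} {s t u : Term T.sig V} :
      Theory.Eq T s t → Theory.Eq T t u → Theory.Eq T s u
  | congr {V : Type} (o : T.sig.Op) {ts ts' : Fin (T.sig.ar o) → Term T.sig V}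
      (h : ∀ i, Theory.Eq T (ts i) (ts' i)) : Theory.Eq T (.op o ts) (.op o ts')
  | subst {V W : Type} {s t : Term T.sig V} (f : V → Term T.sig W) :
      Theory.Eq T s t → Theory.Eq T (s.subst f) (t.subst f)

/-- Disjoint union of two signatures. -/
def Signature.sum (A B : Signature) : Signature := ⟨A.Op ⊕ B.Op, Sum.elim A.ar B.ar⟩

/-- Embedding of terms of the first theory into the sum signature. -/
def Term.inL {A B : Signature} {V : Type} : Term A V → Term (A.sum B) V
  | .var v => .var v
  | .op o ts => .op (Sum.inl o) (fun i => (ts i).inL)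

/-- Embedding of terms of the second theory into the sum signature. -/
def Term.inR {A B : Signature} {V : Type} : Term B V → Term (A.sum B) V
  | .var v => .var v
  | .op o ts => .op (Sum.inr o) (fun i => (ts i).inR)

/-- A closed term, regarded as a term over any variable set. -/
def Term.ofClosed {Sg : Signature} {V : Type} (t : Term Sg Empty) : Term Sg V :=
  t.rename (fun x => x.elim)

/-- A candidate composite theory of `S` and `T`: a theory over the disjoint
union of the two signatures. -/
structure Composite (S T : Theory) where
  Ax : Term (S.sig.sum T.sig) Nat → Term (S.sig.sum T.sig) Nat → Prop

def Composite.U {S T : Theory} (C : Composite S T) : Theory := ⟨S.sig.sum T.sig, C.Ax⟩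

/-- A separated term: a `T`-term with `S`-terms substituted for its variables. -/
def sep {S T : Theory} {V : Type} (t : Term T.sig Nat) (σ : Nat → Term S.sig V) :
    Term (S.sig.sum T.sig) V :=
  (Term.inR (A := S.sig) t).subst (fun n => Term.inL (σ n))

/-- `C` is a composite theory of `S` and `T` in the sense of Pirog–Staton:
it contains both theories, and satisfies separation and essential uniqueness. -/
structure IsComposite {S T : Theory} (C : Composite S T) : Prop where
  containsS : ∀ {V : Type} (s s' : Term S.sig V), S.Eq s s' → C.U.Eq s.inL s'.inL
  containsT : ∀ {V : Type} (t t' : Term T.sig V), T.Eq t t' → C.U.Eq t.inR t'.inR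
  separation : ∀ {V : Type} (u : Term (S.sig.sum T.sig) V),
      ∃ (t : Term T.sig Nat) (σ : Nat → Term S.sig V), C.U.Eq u (sep t σ)
  essUniq : ∀ {V : Type} (t t' : Term T.sig Nat) (σ σ' : Nat → Term S.sig V),
      C.U.Eq (sep t σ) (sep t' σ') →
      ∃ (Z : Type) (f g : Nat → Z),
        T.Eq (t.rename f) (t'.rename g) ∧
        (∀ i j, f i = f j ↔ S.Eq (σ i) (σ j)) ∧
        (∀ i j, g i = g j ↔ S.Eq (σ' i) (σ' j)) ∧
        (∀ i j, f i = g j ↔ S.Eq (σ i) (σ' j))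

/-- Property: any term provably equal to a variable-free term is variable-free. -/
def VarFree0 (T : Theory) : Prop :=
  ∀ (V : Type) (t t' : Term T.sig V), t.fv = ∅ → T.Eq t t' → t'.fv = ∅

/-- Property: any term provably equal to a variable `x` has free variables `⊆ {x}`. -/
def VarSingle (T : Theory) : Prop :=
  ∀ (V : Type) (x : V) (t : Term T.sig V), T.Eq t (.var x) → t.fv ⊆ {x}

/-- Property: every operation of positive arity has a unit constant. -/
def HasUnits (S : Theory) : Prop :=
  ∀ o : S.sig.Op, 1 ≤ S.sig.ar o →
    ∃ e : Term S.sig Empty, ∀ k : Fin (S.sig.ar o),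
      S.Eq (.op o (fun i => if i = k then .var (0 : Nat) else e.ofClosed)) (.var 0)

/-- Application of a term with (at most) free variables `0, 1` to two arguments. -/
def app2 {Sg : Signature} {V : Type} (t : Term Sg Nat) (A B : Term Sg V) : Term Sg V :=
  t.subst (fun n => if n = 0 then A else B)

/-! ### Auxiliary lemmas -/

theorem Term.subst_congr {Sg : Signature} {V W : Type} {t : Term Sg V} {f g : V → Term Sg W}
    (h : ∀ v ∈ t.fv, f v = g v) : t.subst f = t.subst g := by
  induction t with
  | var v => exact h v rfl
  | op o ts ih =>
    simp only [Term.subst]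
    congr 1
    funext k
    exact ih k (fun v hv => h v (Set.mem_iUnion.mpr ⟨k, hv⟩))

theorem Term.subst_subst {Sg : Signature} {V W X : Type} (t : Term Sg V)
    (f : V → Term Sg W) (g : W → Term Sg X) :
    (t.subst f).subst g = t.subst (fun v => (f v).subst g) := by
  induction t with
  | var v => rfl
  | op o ts ih =>
    simp only [Term.subst]
    congr 1
    funext k
    exact ih k

theorem Term.subst_var' {Sg : Signature} {V : Type} (t : Term Sg V) :
    t.subst Term.var = t := by
  induction t with
  | var v => rfl
  | op o ts ih =>
    simp only [Term.subst]
    congr 1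
    funext k
    exact ih k

theorem Term.fv_ofClosed {Sg : Signature} {V : Type} (t : Term Sg Empty) :
    (Term.ofClosed t : Term Sg V).fv = ∅ := by
  induction t with
  | var v => exact v.elim
  | op o ts ih =>
    show (⋃ k, (Term.ofClosed (ts k) : Term Sg V).fv) = ∅
    simp only [Set.iUnion_eq_empty]
    exact ih

theorem Term.ofClosed_subst {Sg : Signature} {V W : Type} (t : Term Sg Empty)
    (f : V → Term Sg W) :
    (Term.ofClosed t : Term Sg V).subst f = Term.ofClosed t := by
  induction t with
  | var v => exact v.elim
  | op o ts ih =>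
    show Term.op o (fun k => (Term.ofClosed (ts k) : Term Sg V).subst f)
        = Term.op o (fun k => (Term.ofClosed (ts k) : Term Sg W))
    congr 1
    funext k
    exact ih k

theorem Term.ofClosed_rename {Sg : Signature} {V W : Type} (t : Term Sg Empty)
    (f : V → W) : (Term.ofClosed t : Term Sg V).rename f = Term.ofClosed t :=
  Term.ofClosed_subst t _

theorem Term.ofClosed_empty {Sg : Signature} (t : Term Sg Empty) :
    (Term.ofClosed t : Term Sg Empty) = t := by
  have h : (fun v : Empty => (Term.var (v.elim) : Term Sg Empty)) = Term.var :=
    funext fun v => v.elim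
  show t.subst _ = t
  rw [h, Term.subst_var']

theorem Term.inL_subst {A B : Signature} {V W : Type} (t : Term A V) (θ : V → Term A W) :
    (Term.inL (B := B) t).subst (fun v => (θ v).inL) = (t.subst θ).inL := by
  induction t with
  | var v => rfl
  | op o ts ih =>
    show Term.op (Sum.inl o) (fun k => (Term.inL (ts k)).subst (fun v => (θ v).inL))
        = Term.op (Sum.inl o) (fun k => ((ts k).subst θ).inL)
    congr 1
    funext k
    exact ih k

theorem Term.ofClosed_inL {A B : Signature} {V : Type} (t : Term A Empty) :
    (Term.ofClosed t : Term A V).inL (B := B) = Term.ofClosed (t.inL) := by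
  induction t with
  | var v => exact v.elim
  | op o ts ih =>
    show Term.op (Sum.inl o) (fun k => (Term.ofClosed (ts k) : Term A V).inL)
        = Term.op (Sum.inl o) (fun k => (Term.ofClosed ((ts k).inL) : Term (A.sum B) V))
    congr 1
    funext k
    exact ih k

theorem Term.ofClosed_inR {A B : Signature} {V : Type} (t : Term B Empty) :
    (Term.ofClosed t : Term B V).inR (A := A) = Term.ofClosed (t.inR) := by
  induction t with
  | var v => exact v.elim
  | op o ts ih =>
    show Term.op (Sum.inr o) (fun k => (Term.ofClosed (ts k) : Term B V).inR)
        = Term.op (Sum.inr o) (fun k => (Term.ofClosed ((ts k).inR) : Term (A.sum B) V))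
    congr 1
    funext k
    exact ih k

theorem Term.fv_inR {A B : Signature} {V : Type} (t : Term B V) :
    (Term.inR (A := A) t).fv = t.fv := by
  induction t with
  | var v => rfl
  | op o ts ih =>
    show (⋃ k, (Term.inR (ts k)).fv) = ⋃ k, (ts k).fv
    exact Set.iUnion_congr ih

theorem Term.fv_rename_empty {Sg : Signature} {V W : Type} {t : Term Sg V} {f : V → W}
    (h : (t.rename f).fv = ∅) : t.fv = ∅ := by
  induction t with
  | var v =>
    exact absurd h (by simp [Term.rename, Term.subst, Term.fv])
  | op o ts ih =>
    have h' : ∀ k, ((ts k).rename f).fv = ∅ := by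
      have := Set.iUnion_eq_empty.mp h
      exact this
    show (⋃ k, (ts k).fv) = ∅
    exact Set.iUnion_eq_empty.mpr (fun k => ih k (h' k))

theorem sep_subst {S T : Theory} {V W : Type} (t : Term T.sig Nat)
    (σ : Nat → Term S.sig V) (θ : V → Term S.sig W) :
    (sep t σ).subst (fun v => (θ v).inL) = sep t (fun n => (σ n).subst θ) := by
  show ((Term.inR t).subst _).subst _ = (Term.inR t).subst _
  rw [Term.subst_subst]
  congr 1
  funext n
  exact Term.inL_subst (σ n) θ

theorem sep_closed {S T : Theory} {V : Type} {t : Term T.sig Nat}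
    (h : t.fv = ∅) (σ σ' : Nat → Term S.sig V) : sep t σ = sep t σ' := by
  apply Term.subst_congr
  intro v hv
  rw [Term.fv_inR, h] at hv
  exact absurd hv (Set.notMem_empty v)

theorem sep_ofClosed {S T : Theory} {V : Type} (c : Term T.sig Empty)
    (σ : Nat → Term S.sig V) :
    sep (Term.ofClosed c) σ = Term.ofClosed (Term.inR c) := by
  show ((Term.ofClosed c : Term T.sig Nat).inR).subst _ = _
  rw [Term.ofClosed_inR, Term.ofClosed_subst]

/-- In a composite, a term that is equal to a `𝕋`-constant after substituting
`𝕊`-terms for its variables is itself equal to that constant. -/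
theorem zeroA {S T : Theory} {C : Composite S T} (hC : IsComposite C) (hT0 : VarFree0 T)
    (c : Term T.sig Empty) {V : Type} (u : Term (S.sig.sum T.sig) V)
    (θ : V → Term S.sig V)
    (h : C.U.Eq (u.subst (fun v => (θ v).inL)) (Term.ofClosed (Term.inR c))) :
    C.U.Eq u (Term.ofClosed (Term.inR c)) := by
  obtain ⟨t, σ, hu⟩ := hC.separation u
  have hu2 : C.U.Eq (u.subst (fun v => (θ v).inL)) (sep t (fun n => (σ n).subst θ)) := by
    have := Theory.Eq.subst (fun v => (θ v).inL) hu
    exact Eq.mp (congrArg (C.U.Eq (u.subst (fun v => (θ v).inL))) (sep_subst t σ θ)) this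
  have h3 : C.U.Eq (sep t (fun n => (σ n).subst θ)) (sep (Term.ofClosed c) σ) := by
    rw [sep_ofClosed]
    exact hu2.symm.trans h
  obtain ⟨Z, f, g, hT, -, -, -⟩ := hC.essUniq t (Term.ofClosed c) _ _ h3
  have hfv : (t.rename f).fv = ∅ := by
    apply hT0 Z ((Term.ofClosed c : Term T.sig Nat).rename g) _ _ (Theory.Eq.symm hT)
    rw [Term.ofClosed_rename]
    exact Term.fv_ofClosed c
  have htfv : t.fv = ∅ := Term.fv_rename_empty hfv
  have hss : sep t σ = sep t (fun n => (σ n).subst θ) := sep_closed htfv _ _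
  refine hu.trans ?_
  rw [hss]
  exact hu2.symm.trans h

/-- The key unit computation: a `𝕊`-operation applied to a `𝕋`-constant at one
position and variables elsewhere equals the constant. -/
theorem unitZero {S T : Theory} {C : Composite S T} (hC : IsComposite C) (hT0 : VarFree0 T)
    (c : Term T.sig Empty) (o : S.sig.Op) (m : Fin (S.sig.ar o)) (e : Term S.sig Empty)
    (he : S.Eq (.op o (fun k => if k = m then .var (0 : Nat) else e.ofClosed)) (.var 0)) :
    C.U.Eq
      (.op (Sum.inl o) (fun k => @ite _ (k = m) (instDecidableEqFin _ k m) (Term.ofClosed (Term.inR c)) (.var k))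
        : Term (S.sig.sum T.sig) (Fin (S.sig.ar o)))
      (Term.ofClosed (Term.inR c)) := by
  apply zeroA hC hT0 c _ (fun _ => Term.ofClosed e)
  have h0 := hC.containsS _ _ he
  have h1 := Theory.Eq.subst
      (fun _ : Nat => (Term.ofClosed (Term.inR c) : Term (S.sig.sum T.sig) (Fin (S.sig.ar o)))) h0
  have hL :
      ((Term.inL (Term.op o (fun k => if k = m then (.var (0:Nat) : Term S.sig Nat)
            else e.ofClosed)) : Term (S.sig.sum T.sig) Nat).subst
        (fun _ => (Term.ofClosed (Term.inR c) : Term (S.sig.sum T.sig) (Fin (S.sig.ar o)))))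
      = ((Term.op (Sum.inl o) (fun k => @ite _ (k = m) (instDecidableEqFin _ k m) (Term.ofClosed (Term.inR c)) (.var k))
          : Term (S.sig.sum T.sig) (Fin (S.sig.ar o))).subst
        (fun v => ((fun _ : Fin (S.sig.ar o) =>
            (Term.ofClosed e : Term S.sig (Fin (S.sig.ar o)))) v).inL)) := by
    simp only [Term.inL, Term.subst]
    congr 1
    funext k
    by_cases hk : k = m
    · have hk' : @Eq (Fin (S.sig.ar o)) k m := hk
      have hk'' : @Eq (Fin ((S.sig.sum T.sig).ar (Sum.inl o))) k m := hk
      simp only [if_pos hk, if_pos hk', if_pos hk'']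
      simp only [Term.inL, Term.subst]
      rw [Term.ofClosed_subst]
    · have hk' : ¬ @Eq (Fin (S.sig.ar o)) k m := hk
      have hk'' : ¬ @Eq (Fin ((S.sig.sum T.sig).ar (Sum.inl o))) k m := hk
      simp only [if_neg hk, if_neg hk', if_neg hk'']
      simp only [Term.subst]
      rw [Term.ofClosed_inL, Term.ofClosed_inL, Term.ofClosed_subst]
  exact Eq.mp (congrArg₂ C.U.Eq hL rfl) h1

/-- A `𝕊`-operation applied to a `𝕋`-constant at one position and arbitrary
arguments elsewhere equals the constant. -/
theorem opZero {S T : Theory} {C : Composite S T} (hC : IsComposite C) (hS : HasUnits S)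
    (hT0 : VarFree0 T) (c : Term T.sig Empty) {V : Type} (o : S.sig.Op)
    (m : Fin (S.sig.ar o)) (A : Fin (S.sig.ar o) → Term (S.sig.sum T.sig) V) :
    C.U.Eq (.op (Sum.inl o) (fun k => @ite _ (k = m) (instDecidableEqFin _ k m) (Term.ofClosed (Term.inR c)) (A k)))
      (Term.ofClosed (Term.inR c)) := by
  obtain ⟨e, he⟩ := hS o m.pos
  have hw := unitZero (C := C) hC hT0 c o m e (he m)
  have h1 := Theory.Eq.subst
    (fun k : Fin (S.sig.ar o) => if k = m then Term.ofClosed (Term.inR c) else A k) hw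
  have hL : ((Term.op (Sum.inl o)
          (fun k => @ite _ (k = m) (instDecidableEqFin _ k m) (Term.ofClosed (Term.inR c)) (.var k))
        : Term (S.sig.sum T.sig) (Fin (S.sig.ar o))).subst
        (fun k : Fin (S.sig.ar o) => if k = m then Term.ofClosed (Term.inR c) else A k))
      = (Term.op (Sum.inl o)
          (fun k => @ite _ (k = m) (instDecidableEqFin _ k m) (Term.ofClosed (Term.inR c)) (A k))
        : Term (S.sig.sum T.sig) V) := by
    simp only [Term.subst]
    congr 1
    funext k
    by_cases hk : k = m
    · have hk' : @Eq (Fin (S.sig.ar o)) k m := hk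
      have hk'' : @Eq (Fin ((S.sig.sum T.sig).ar (Sum.inl o))) k m := hk
      simp only [if_pos hk, if_pos hk', if_pos hk'', Term.ofClosed_subst]
    · have hk' : ¬ @Eq (Fin (S.sig.ar o)) k m := hk
      have hk'' : ¬ @Eq (Fin ((S.sig.sum T.sig).ar (Sum.inl o))) k m := hk
      simp only [if_neg hk, if_neg hk', if_neg hk'']
      simp only [Term.subst]
      simp only [if_neg hk, if_neg hk', if_neg hk'']
  exact Eq.mp (congrArg₂ C.U.Eq hL (Term.ofClosed_subst _ _)) h1

/-- Times-zero: an `𝕊`-term with a `𝕋`-constant substituted for one of its free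
variables is equal to that constant in any composite. -/
theorem zeroZ {S T : Theory} {C : Composite S T} (hC : IsComposite C)
    (hS : HasUnits S) (hT0 : VarFree0 T) (c : Term T.sig Empty) {V : Type} :
    ∀ (s : Term S.sig Nat) (i : Nat), i ∈ s.fv →
      ∀ δ : Nat → Term (S.sig.sum T.sig) V, δ i = Term.ofClosed (Term.inR c) →
        C.U.Eq ((Term.inL s).subst δ) (Term.ofClosed (Term.inR c)) := by
  intro s
  induction s with
  | var v =>
    intro i hiv δ hδ
    have hv : i = v := hiv
    show C.U.Eq (δ v) _
    rw [← hv, hδ]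
    exact Theory.Eq.refl _
  | op o ts ih =>
    intro i hiv δ hδ
    obtain ⟨m, hm⟩ := Set.mem_iUnion.mp hiv
    have hAm : C.U.Eq ((Term.inL (ts m)).subst δ) (Term.ofClosed (Term.inR c)) :=
      ih m i hm δ hδ
    have e0 : (Term.inL (Term.op o ts) : Term (S.sig.sum T.sig) Nat).subst δ
        = Term.op (Sum.inl o) (fun k => (Term.inL (ts k)).subst δ) := rfl
    have step1 : C.U.Eq ((Term.inL (Term.op o ts)).subst δ)
        (.op (Sum.inl o) (fun k => @ite _ (k = m) (instDecidableEqFin _ k m) (Term.ofClosed (Term.inR c))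
            ((Term.inL (ts k)).subst δ))) := by
      rw [e0]
      apply Theory.Eq.congr
      intro k
      by_cases hk : k = m
      · exact Eq.mpr (congrArg (C.U.Eq _) (if_pos hk)) (by subst hk; exact hAm)
      · exact Eq.mpr (congrArg (C.U.Eq _) (if_neg hk)) (Theory.Eq.refl _)
    exact step1.trans (opZero hC hS hT0 c o m _)

/-- **No-go theorem: too many constants.** If every positive-arity operation of `𝕊`
has a unit constant and `𝕊` has a term with at least two free variables, and in `𝕋`
any term equal to a variable-free term is variable-free, then if `𝕋` has two
constants that are not provably equal, there is no composite theory of `𝕊` and `𝕋`. -/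
theorem no_composite_two_constants (S T : Theory)
    (hS : HasUnits S)
    (s : Term S.sig Nat) (i j : Nat) (hij : i ≠ j) (hi : i ∈ s.fv) (hj : j ∈ s.fv)
    (hT0 : VarFree0 T)
    (c1 c2 : Term T.sig Empty) (hcc : ¬ T.Eq c1 c2) :
    ∀ C : Composite S T, ¬ IsComposite C := by
  intro C hC
  set δ : Nat → Term (S.sig.sum T.sig) Nat :=
    fun n => if n = i then Term.ofClosed (Term.inR c1) else Term.ofClosed (Term.inR c2)
    with hδ
  have h1 : C.U.Eq ((Term.inL s).subst δ) (Term.ofClosed (Term.inR c1)) :=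
    zeroZ hC hS hT0 c1 s i hi δ (by simp [hδ])
  have h2 : C.U.Eq ((Term.inL s).subst δ) (Term.ofClosed (Term.inR c2)) :=
    zeroZ hC hS hT0 c2 s j hj δ
      (by simp [hδ, Ne.symm hij])
  have h12 : C.U.Eq (Term.ofClosed (Term.inR c1) : Term (S.sig.sum T.sig) Nat)
      (Term.ofClosed (Term.inR c2)) := h1.symm.trans h2
  have h12' : C.U.Eq (sep (Term.ofClosed c1) (fun _ => (.var 0 : Term S.sig Nat)))
      (sep (Term.ofClosed c2) (fun _ => (.var 0 : Term S.sig Nat))) := by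
    rw [sep_ofClosed, sep_ofClosed]
    exact h12
  obtain ⟨Z, f, g, hT, -, -, -⟩ := hC.essUniq _ _ _ _ h12'
  rw [Term.ofClosed_rename, Term.ofClosed_rename] at hT
  have := Theory.Eq.subst (fun _ : Z => c1) hT
  rw [Term.ofClosed_subst, Term.ofClosed_subst, Term.ofClosed_empty, Term.ofClosed_empty]
    at this
  exact hcc this
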